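/- Let p* ∈ ℝ^X with p* ≥ 0 and p*_w = 0 for some w ∈ X, and suppose ξ_x ≤ ξ̄ < b_i for all x ∈ X almost surely. Suppose either (i) ξ = c·𝟙 almost surely for some real random variable c, or (ii) ξ = c·𝟙 + ζ almost surely with |ζ_x| ≤ z for all x and |p*_x − p*_y| > 2z for all distinct x, y ∈ X. Let a* ∈ L_i(p*) and let a ∈ [0,1]^X with Σ_x a_x = 1. If a stochastically dominates a* with respect to ≽_i, then p*·a ≥ p*·a*; if the dominance is strict, then p*·a > p*·a*. -/
import Mathlib


open MeasureTheory Pointwise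

/-- The standard basis vector `e_x` in `ℝ^X`. -/
def basisVec {X : Type*} [DecidableEq X] (x : X) : X → ℝ := fun y => if y = x then 1 else 0

/-- The demand correspondence `D_i(q)`: cheapest most-preferred affordable objects
(as basis vectors), or `{0}` when nothing is affordable. -/
def Demand {X : Type*} [DecidableEq X] (pref : X → X → Prop) (b : ℝ) (q : X → ℝ) :
    Set (X → ℝ) :=
  {d | (∃ x, q x ≤ b ∧ d = basisVec x ∧
          (∀ y, q y ≤ b → pref x y) ∧
          (∀ y, q y ≤ b → (∀ z, q z ≤ b → pref y z) → q x ≤ q y)) ∨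
       ((¬ ∃ x, q x ≤ b) ∧ d = 0)}

/-- Lottery demand: the Aumann integral of the demand correspondence over the
price shock with law `G`. -/
def Lottery {X : Type*} [Fintype X] [DecidableEq X] (pref : X → X → Prop) (b : ℝ)
    (G : Measure (X → ℝ)) (p : X → ℝ) : Set (X → ℝ) :=
  {a | ∃ g : (X → ℝ) → (X → ℝ), Measurable g ∧
        (∀ᵐ ξ ∂G, g ξ ∈ Demand pref b (p + ξ)) ∧ a = ∫ ξ, g ξ ∂G}

/-- Assumption 1: each coordinate of the price shock is atomless, mean-zero,
and almost surely bounded in `[ξlo, ξhi]`. -/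
def Assumption1 {X : Type*} [Fintype X] (G : Measure (X → ℝ)) (ξlo ξhi : ℝ) : Prop :=
  ∀ x : X, (∀ r : ℝ, G {ξ | ξ x = r} = 0) ∧ (∫ ξ, ξ x ∂G) = 0 ∧
    (∀ᵐ ξ ∂G, ξlo ≤ ξ x ∧ ξ x ≤ ξhi)

open Classical in
/-- `a'` stochastically dominates `a` with respect to the preference `pref`. -/
noncomputable def StochDom {X : Type*} [Fintype X] (pref : X → X → Prop)
    (a' a : X → ℝ) : Prop :=
  ∀ x : X, ∑ y ∈ Finset.univ.filter (fun y => pref y x), a y ≤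
    ∑ y ∈ Finset.univ.filter (fun y => pref y x), a' y

open Classical in
/-- Strict stochastic dominance. -/
noncomputable def StrictStochDom {X : Type*} [Fintype X] (pref : X → X → Prop)
    (a' a : X → ℝ) : Prop :=
  StochDom pref a' a ∧
    ∃ x : X, ∑ y ∈ Finset.univ.filter (fun y => pref y x), a y <
      ∑ y ∈ Finset.univ.filter (fun y => pref y x), a' y


section AuxLemmas
open Finset

private lemma abel_aux {X : Type*} [Fintype X] [DecidableEq X] (d : X → ℝ) :
    ∀ (K : ℕ) (m : X → ℝ),
      ((univ.image m).filter (fun v => 0 < v)).card ≤ K →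
      (∀ x, 0 ≤ m x) →
      (∀ c : ℝ, 0 < c → 0 ≤ ∑ x ∈ univ.filter (fun x => c ≤ m x), d x) →
      0 ≤ ∑ x, m x * d x ∧
        (∑ x, m x * d x ≤ 0 →
          ∀ c : ℝ, 0 < c → ∑ x ∈ univ.filter (fun x => c ≤ m x), d x = 0) := by
  intro K
  induction K with
  | zero =>
      intro m hcard h0 hlev
      have hm0 : ∀ x, m x = 0 := by
        intro x
        by_contra hx
        have hpos : 0 < m x := lt_of_le_of_ne (h0 x) (Ne.symm hx)
        have hmem : m x ∈ (univ.image m).filter (fun v => 0 < v) :=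
          mem_filter.mpr ⟨mem_image_of_mem m (mem_univ x), hpos⟩
        have := Finset.card_pos.mpr ⟨_, hmem⟩
        omega
      refine ⟨by simp [hm0], fun _ c hc => ?_⟩
      have he : univ.filter (fun x => c ≤ m x) = ∅ := by
        apply Finset.filter_eq_empty_iff.mpr
        intro x _
        rw [hm0 x]
        exact not_le.mpr hc
      simp [he]
  | succ K ih =>
      intro m hcard h0 hlev
      by_cases hK : ((univ.image m).filter (fun v => 0 < v)).card ≤ K
      · exact ih m hK h0 hlev
      have hne : ((univ.image m).filter (fun v => 0 < v)).Nonempty := by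
        rw [← Finset.card_pos]; omega
      set S := (univ.image m).filter (fun v => 0 < v) with hSdef
      set v := S.min' hne with hvdef
      have hvpos : 0 < v := (Finset.mem_filter.mp (S.min'_mem hne)).2
      have hvmin : ∀ x, 0 < m x → v ≤ m x := fun x hx =>
        Finset.min'_le _ _ (mem_filter.mpr ⟨mem_image_of_mem m (mem_univ x), hx⟩)
      have hsmall : ∀ x, ¬ v ≤ m x → m x = 0 := by
        intro x hx
        by_contra h
        exact hx (hvmin x (lt_of_le_of_ne (h0 x) (Ne.symm h)))
      set m' : X → ℝ := fun x => if v ≤ m x then m x - v else 0 with hm'def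
      have h0' : ∀ x, 0 ≤ m' x := by
        intro x
        simp only [hm'def]
        split
        · linarith
        · exact le_refl 0
      have hlevset : ∀ c : ℝ, 0 < c →
          univ.filter (fun x => c ≤ m' x) = univ.filter (fun x => c + v ≤ m x) := by
        intro c hc
        ext x
        simp only [mem_filter, mem_univ, true_and, hm'def]
        constructor
        · intro h
          by_cases hvx : v ≤ m x
          · rw [if_pos hvx] at h; linarith
          · rw [if_neg hvx] at h; linarith
        · intro h
          have hvx : v ≤ m x := by linarith
          rw [if_pos hvx]; linarith
      have hsub : (univ.image m').filter (fun u => 0 < u) ⊆ (S.erase v).image (fun u => u - v) := by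
        intro u hu
        obtain ⟨hu1, hu2⟩ := Finset.mem_filter.mp hu
        obtain ⟨x, _, hx⟩ := Finset.mem_image.mp hu1
        by_cases hvx : v ≤ m x
        · have humx : u = m x - v := by rw [← hx]; simp only [hm'def, if_pos hvx]
          have hlt : v < m x := by
            have : (0:ℝ) < u := hu2
            rw [humx] at this; linarith
          refine Finset.mem_image.mpr ⟨m x, Finset.mem_erase.mpr ⟨ne_of_gt hlt, ?_⟩, by linarith⟩
          exact Finset.mem_filter.mpr ⟨mem_image_of_mem m (mem_univ x), by linarith⟩
        · exfalso
          rw [← hx] at hu2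
          simp only [hm'def, if_neg hvx] at hu2
          exact lt_irrefl 0 hu2
      have hvS : v ∈ S := S.min'_mem hne
      have hcard' : ((univ.image m').filter (fun u => 0 < u)).card ≤ K := by
        have h1 := Finset.card_le_card hsub
        have h2 := Finset.card_image_le (s := S.erase v) (f := fun u => u - v)
        have h3 : (S.erase v).card = S.card - 1 := Finset.card_erase_of_mem hvS
        have h4 : S.card ≤ K + 1 := hcard
        have h5 : 1 ≤ S.card := Finset.card_pos.mpr hne
        omega
      have hdecomp : ∑ x, m x * d x
          = (∑ x, m' x * d x) + v * ∑ x ∈ univ.filter (fun x => v ≤ m x), d x := by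
        rw [Finset.mul_sum, Finset.sum_filter, ← Finset.sum_add_distrib]
        apply Finset.sum_congr rfl
        intro x _
        by_cases hvx : v ≤ m x
        · simp only [hm'def, if_pos hvx]; ring
        · have h1 : m' x = 0 := by simp only [hm'def, if_neg hvx]
          rw [h1, if_neg hvx, hsmall x hvx]; ring
      obtain ⟨IH1, IH2⟩ := ih m' hcard' h0'
        (fun c hc => by rw [hlevset c hc]; exact hlev (c + v) (by linarith))
      have hSv : 0 ≤ ∑ x ∈ univ.filter (fun x => v ≤ m x), d x := hlev v hvpos
      have hvSv : 0 ≤ v * ∑ x ∈ univ.filter (fun x => v ≤ m x), d x := mul_nonneg hvpos.le hSv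
      constructor
      · rw [hdecomp]; linarith
      · intro hle c hc
        rw [hdecomp] at hle
        have hSv0 : ∑ x ∈ univ.filter (fun x => v ≤ m x), d x = 0 := by
          have hv0 : v * ∑ x ∈ univ.filter (fun x => v ≤ m x), d x = 0 := le_antisymm (by linarith) hvSv
          rcases mul_eq_zero.mp hv0 with h | h
          · exact absurd h (ne_of_gt hvpos)
          · exact h
        rcases le_or_gt c v with hcv | hcv
        · have heq : univ.filter (fun x => c ≤ m x) = univ.filter (fun x => v ≤ m x) := by
            ext x
            simp only [mem_filter, mem_univ, true_and]
            exact ⟨fun h => hvmin x (lt_of_lt_of_le hc h), fun h => le_trans hcv h⟩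
          rw [heq]; exact hSv0
        · have hsum' : ∑ x, m' x * d x ≤ 0 := by linarith
          have := IH2 hsum' (c - v) (by linarith)
          rw [hlevset (c - v) (by linarith)] at this
          rw [show c - v + v = c from by ring] at this
          exact this

private lemma key_lemma {X : Type*} [Fintype X] [DecidableEq X] (pref : X → X → Prop)
    (hcomplete : ∀ x y, pref x y ∨ pref y x) (htrans : Transitive pref)
    (p astar a : X → ℝ) (hp : ∀ x, 0 ≤ p x)
    (hastar0 : ∀ x, 0 ≤ astar x) (hastar1 : ∑ x, astar x = 1)
    (ha0 : ∀ x, 0 ≤ a x) (hsum : ∑ x, a x = 1)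
    (hstar : ∀ x y, pref x y → 0 < astar y → p y ≤ p x)
    (hstrict : ∀ x y, pref x y → ¬ pref y x → 0 < astar y → p y < p x) :
    (StochDom pref a astar → ∑ x, p x * astar x ≤ ∑ x, p x * a x) ∧
    (StrictStochDom pref a astar → ∑ x, p x * astar x < ∑ x, p x * a x) := by
  classical
  set d : X → ℝ := fun x => a x - astar x with hd
  have hrefl : ∀ x, pref x x := fun x => (hcomplete x x).elim id id
  have hUCne : ∀ x : X, (univ.filter (fun y => pref y x)).Nonempty :=
    fun x => ⟨x, mem_filter.mpr ⟨mem_univ x, hrefl x⟩⟩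
  set m : X → ℝ := fun x => (univ.filter (fun y => pref y x)).inf' (hUCne x) p with hm
  have hm_le : ∀ x y, pref y x → m x ≤ p y := by
    intro x y h
    show (univ.filter (fun y => pref y x)).inf' (hUCne x) p ≤ p y
    exact Finset.inf'_le p (show y ∈ univ.filter (fun y' => pref y' x) from
      mem_filter.mpr ⟨mem_univ y, h⟩)
  have hm_ex : ∀ x, ∃ y, pref y x ∧ m x = p y := by
    intro x
    obtain ⟨y, hy, hy2⟩ := Finset.exists_mem_eq_inf' (hUCne x) p
    exact ⟨y, (mem_filter.mp hy).2, hy2⟩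
  have hm0 : ∀ x, 0 ≤ m x := by
    intro x
    obtain ⟨y, _, h⟩ := hm_ex x
    rw [h]; exact hp y
  have hmp : ∀ x, m x ≤ p x := fun x => hm_le x x (hrefl x)
  have hm_eq : ∀ x, 0 < astar x → m x = p x := by
    intro x hx
    have h2 : p x ≤ (univ.filter (fun y => pref y x)).inf' (hUCne x) p :=
      Finset.le_inf' _ _ (fun y hy => hstar y x (mem_filter.mp hy).2 hx)
    exact le_antisymm (hmp x) h2
  have hm_mono : ∀ x y, pref x y → m y ≤ m x := by
    intro x y hxy
    obtain ⟨zz, hz1, hz2⟩ := hm_ex x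
    rw [hz2]
    exact hm_le y zz (htrans hz1 hxy)
  set r : X → ℕ := fun x => (univ.filter (fun z => pref x z)).card with hrdef
  have hrank : ∀ x y, r y ≤ r x → pref x y := by
    intro x y hle
    by_contra hxy
    have hyx : pref y x := (hcomplete x y).resolve_left hxy
    have hsubset : univ.filter (fun z => pref x z) ⊆ univ.filter (fun z => pref y z) := by
      intro u hu
      exact mem_filter.mpr ⟨mem_univ u, htrans hyx (mem_filter.mp hu).2⟩
    have hlt : r x < r y := by
      apply Finset.card_lt_card
      rw [Finset.ssubset_iff_of_subset hsubset]
      exact ⟨y, mem_filter.mpr ⟨mem_univ y, hrefl y⟩, fun h => hxy (mem_filter.mp h).2⟩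
    omega
  have core : StochDom pref a astar →
      (∑ x, p x * astar x ≤ ∑ x, p x * a x) ∧
      ((∃ x0 : X, ∑ y ∈ Finset.univ.filter (fun y => pref y x0), astar y <
          ∑ y ∈ Finset.univ.filter (fun y => pref y x0), a y) →
        ∑ x, p x * astar x < ∑ x, p x * a x) := by
    intro hSD
    have hS : ∀ x, 0 ≤ ∑ y ∈ univ.filter (fun y => pref y x), d y := by
      intro x
      have h1 := hSD x
      simp only [hd]
      rw [Finset.sum_sub_distrib]
      linarith
    have htot : ∑ x, d x = 0 := by
      simp only [hd]
      rw [Finset.sum_sub_distrib, hsum, hastar1]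
      ring
    have hlev : ∀ c : ℝ, 0 < c → 0 ≤ ∑ x ∈ univ.filter (fun x => c ≤ m x), d x := by
      intro c hc
      rcases Finset.eq_empty_or_nonempty (univ.filter (fun x => c ≤ m x)) with he | hne
      · simp [he]
      · obtain ⟨xc, hxc, hxcmin⟩ := Finset.exists_min_image _ r hne
        have hfe : univ.filter (fun x => c ≤ m x) = univ.filter (fun y => pref y xc) := by
          ext u
          simp only [mem_filter, mem_univ, true_and]
          constructor
          · intro hu
            exact hrank u xc (hxcmin u (mem_filter.mpr ⟨mem_univ u, hu⟩))
          · intro hu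
            exact le_trans (mem_filter.mp hxc).2 (hm_mono u xc hu)
        rw [hfe]
        exact hS xc
    obtain ⟨A1, A2⟩ := abel_aux d _ m le_rfl hm0 hlev
    have hiden : ∑ x, p x * a x - ∑ x, p x * astar x
        = (∑ x, (p x - m x) * a x) + ∑ x, m x * d x := by
      have h1 : ∑ x, p x * astar x = ∑ x, m x * astar x := by
        apply Finset.sum_congr rfl
        intro x _
        rcases eq_or_lt_of_le (hastar0 x) with h | h
        · rw [← h]; ring
        · rw [hm_eq x h]
      rw [h1, ← Finset.sum_sub_distrib, ← Finset.sum_add_distrib]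
      apply Finset.sum_congr rfl
      intro x _
      simp only [hd]
      ring
    have hterm1 : 0 ≤ ∑ x, (p x - m x) * a x :=
      Finset.sum_nonneg fun x _ => mul_nonneg (by linarith [hmp x]) (ha0 x)
    constructor
    · linarith
    · rintro ⟨x0, hx0⟩
      by_contra hno
      push_neg at hno
      have hmd0 : ∑ x, m x * d x ≤ 0 := by linarith
      have hlev0 := A2 hmd0
      have hSx0 : 0 < ∑ y ∈ univ.filter (fun y => pref y x0), d y := by
        simp only [hd]
        rw [Finset.sum_sub_distrib]
        linarith
      have hWne : ∃ y, 0 < astar y ∧ ¬ pref y x0 := by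
        by_contra hco
        push_neg at hco
        have hzero : ∀ y, ¬ pref y x0 → astar y = 0 := by
          intro y hy
          refine le_antisymm ?_ (hastar0 y)
          by_contra h
          exact hy (hco y (lt_of_not_ge h))
        have h1 : ∑ y ∈ univ.filter (fun y => pref y x0), astar y = 1 := by
          rw [← hastar1]
          apply Finset.sum_subset (filter_subset _ _)
          intro y _ hy
          exact hzero y (by simpa using hy)
        have h2 : ∑ y ∈ univ.filter (fun y => pref y x0), a y ≤ 1 := by
          rw [← hsum]
          exact Finset.sum_le_sum_of_subset_of_nonneg (filter_subset _ _) (fun y _ _ => ha0 y)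
        have h3 : ∑ y ∈ univ.filter (fun y => pref y x0), d y ≤ 0 := by
          simp only [hd]
          rw [Finset.sum_sub_distrib]
          linarith
        linarith
      obtain ⟨y1, hy1⟩ := hWne
      obtain ⟨ystar, hysmem, hysmax⟩ := Finset.exists_max_image
        (univ.filter (fun y => 0 < astar y ∧ ¬ pref y x0)) p
        ⟨y1, mem_filter.mpr ⟨mem_univ y1, hy1⟩⟩
      have hysW : 0 < astar ystar ∧ ¬ pref ystar x0 := (mem_filter.mp hysmem).2
      have hm_x0_gt : p ystar < m x0 := by
        show p ystar < (univ.filter (fun y => pref y x0)).inf' (hUCne x0) p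
        rw [Finset.lt_inf'_iff]
        intro y hy
        have hyx0 : pref y x0 := (mem_filter.mp hy).2
        have hx0ys : pref x0 ystar := (hcomplete ystar x0).resolve_left hysW.2
        have h1 : pref y ystar := htrans hyx0 hx0ys
        have h2 : ¬ pref ystar y := fun h => hysW.2 (htrans h hyx0)
        exact hstrict y ystar h1 h2 hysW.1
      have hlev_eq := hlev0 (m x0) (lt_of_le_of_lt (hp ystar) hm_x0_gt)
      have hsubUC : univ.filter (fun y => pref y x0) ⊆ univ.filter (fun x => m x0 ≤ m x) := by
        intro u hu
        exact mem_filter.mpr ⟨mem_univ u, hm_mono u x0 (mem_filter.mp hu).2⟩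
      have hsplit := Finset.sum_sdiff (f := d) hsubUC
      have hneg : ∑ yy ∈ (univ.filter (fun x => m x0 ≤ m x)) \ (univ.filter (fun y => pref y x0)),
          d yy < 0 := by linarith
      have hex : ∃ x1 ∈ (univ.filter (fun x => m x0 ≤ m x)) \ (univ.filter (fun y => pref y x0)),
          d x1 < (fun _ => (0:ℝ)) x1 := by
        apply Finset.exists_lt_of_sum_lt
        simpa using hneg
      obtain ⟨x1, hx1mem, hx1⟩ := hex
      simp only at hx1
      have hx1a : 0 < astar x1 := by
        have h1 : d x1 = a x1 - astar x1 := rfl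
        have := ha0 x1
        rw [h1] at hx1
        linarith
      have hx1mem' := Finset.mem_sdiff.mp hx1mem
      have hx1lev : m x0 ≤ m x1 := (mem_filter.mp hx1mem'.1).2
      have hx1nUC : ¬ pref x1 x0 := fun h => hx1mem'.2 (mem_filter.mpr ⟨mem_univ _, h⟩)
      have hps := hysmax x1 (mem_filter.mpr ⟨mem_univ x1, hx1a, hx1nUC⟩)
      have hmx1 := hm_eq x1 hx1a
      linarith
  constructor
  · intro hSD
    exact (core hSD).1
  · intro hSSD
    obtain ⟨hSD, x0, hx0⟩ := hSSD
    exact (core hSD).2 ⟨x0, hx0⟩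

end AuxLemmas

/-- Lemma 2 (Strassen bound): a stochastically dominating bundle is at least as
expensive at equilibrium prices, strictly so under strict dominance, provided
either the common-shock (no tie-breaking) or the separated-prices random
tie-breaking condition holds. -/
theorem dominating_bundle_costs_more
    {X : Type*} [Fintype X] [DecidableEq X]
    (pref : X → X → Prop)
    (hcomplete : ∀ x y, pref x y ∨ pref y x)
    (htrans : Transitive pref)
    (bi : ℝ) (hbi : 0 < bi)
    (G : Measure (X → ℝ)) [IsProbabilityMeasure G]
    (pstar : X → ℝ) (hp : ∀ x, 0 ≤ pstar x)
    (w : X) (hw : pstar w = 0)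
    (ξhi : ℝ) (hbound : ∀ᵐ ξ ∂G, ∀ x : X, ξ x ≤ ξhi) (hξb : ξhi < bi)
    (z : ℝ) (hz : 0 ≤ z)
    -- case (i): common shock; or case (ii): bounded idiosyncratic part with
    -- positive prices separated by more than 2z
    (hcase :
      (∀ᵐ ξ ∂G, ∀ x y : X, ξ x = ξ y) ∨
      ((∀ᵐ ξ ∂G, ∃ c : ℝ, ∀ x : X, |ξ x - c| ≤ z) ∧
        (∀ x y : X, x ≠ y → 2 * z < |pstar x - pstar y|)))
    (astar : X → ℝ) (hastar : astar ∈ Lottery pref bi G pstar)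
    (a : X → ℝ) (ha01 : ∀ x, 0 ≤ a x ∧ a x ≤ 1) (hsum : ∑ x, a x = 1) :
    (StochDom pref a astar → ∑ x, pstar x * astar x ≤ ∑ x, pstar x * a x) ∧
    (StrictStochDom pref a astar → ∑ x, pstar x * astar x < ∑ x, pstar x * a x) := by
  classical
  obtain ⟨g, hgmeas, hgae, hgdef⟩ := hastar
  have hgood : ∀ᵐ ξ ∂G, (∃ x', (pstar + ξ) x' ≤ bi ∧ g ξ = basisVec x' ∧
      (∀ u, (pstar + ξ) u ≤ bi → pref x' u) ∧
      (∀ u, (pstar + ξ) u ≤ bi → (∀ v, (pstar + ξ) v ≤ bi → pref u v) →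
        (pstar + ξ) x' ≤ (pstar + ξ) u)) ∧ (∀ x, ξ x ≤ ξhi) := by
    filter_upwards [hgae, hbound] with ξ h1 h2
    refine ⟨?_, h2⟩
    rcases h1 with h | ⟨hne, _⟩
    · exact h
    · exact absurd ⟨w, by simp [Pi.add_apply, hw]; linarith [h2 w]⟩ hne
  -- integrability
  have hgbound : ∀ᵐ ξ ∂G, ‖g ξ‖ ≤ 1 := by
    filter_upwards [hgood] with ξ hξ
    obtain ⟨⟨x', _, hgeq, _, _⟩, _⟩ := hξ
    rw [hgeq]
    rw [pi_norm_le_iff_of_nonneg zero_le_one]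
    intro y
    simp only [basisVec]
    split <;> simp
  have hint : Integrable g G :=
    ⟨hgmeas.aestronglyMeasurable, HasFiniteIntegral.of_bounded hgbound⟩
  have hint_coord : ∀ x : X, Integrable (fun ξ => g ξ x) G := fun x =>
    (ContinuousLinearMap.proj (R := ℝ) (φ := fun _ : X => ℝ) x).integrable_comp hint
  have hcoord : ∀ x : X, astar x = ∫ ξ, g ξ x ∂G := by
    intro x
    rw [hgdef]
    exact ((ContinuousLinearMap.proj (R := ℝ) (φ := fun _ : X => ℝ) x).integral_comp_comm hint).symm
  have hnonneg : ∀ x, 0 ≤ astar x := by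
    intro x
    rw [hcoord x]
    apply integral_nonneg_of_ae
    filter_upwards [hgood] with ξ hξ
    obtain ⟨⟨x', _, hgeq, _, _⟩, _⟩ := hξ
    rw [hgeq]
    simp only [basisVec]
    split <;> norm_num
  have hsum1 : ∑ x, astar x = 1 := by
    have h1 : ∑ x, astar x = ∫ ξ, ∑ x, g ξ x ∂G := by
      rw [integral_finset_sum Finset.univ (fun x _ => hint_coord x)]
      exact Finset.sum_congr rfl fun x _ => hcoord x
    rw [h1]
    have h2 : (fun ξ => ∑ x, g ξ x) =ᵐ[G] fun _ => (1:ℝ) := by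
      filter_upwards [hgood] with ξ hξ
      obtain ⟨⟨x', _, hgeq, _, _⟩, _⟩ := hξ
      rw [hgeq]
      simp [basisVec]
    rw [integral_congr_ae h2]
    simp
  -- extraction of a demanded-object witness
  have hposex : ∀ (C : (X → ℝ) → Prop), (∀ᵐ ξ ∂G, C ξ) → ∀ y, 0 < astar y →
      ∃ ξ : X → ℝ, C ξ ∧ (∀ x, ξ x ≤ ξhi) ∧ (pstar + ξ) y ≤ bi ∧
        (∀ u, (pstar + ξ) u ≤ bi → pref y u) ∧
        (∀ u, (pstar + ξ) u ≤ bi → (∀ v, (pstar + ξ) v ≤ bi → pref u v) →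
          (pstar + ξ) y ≤ (pstar + ξ) u) := by
    intro C hC y hy
    by_contra hcon
    have hzero : ∀ᵐ ξ ∂G, g ξ y = 0 := by
      filter_upwards [hgood, hC] with ξ hξ hCξ
      obtain ⟨⟨x', haff, hgeq, hmax, hcheap⟩, hb⟩ := hξ
      by_contra hne
      have hyx : y = x' := by
        by_contra hyx
        rw [hgeq] at hne
        simp [basisVec, hyx] at hne
      subst hyx
      exact hcon ⟨ξ, hCξ, hb, haff, hmax, hcheap⟩
    have : astar y = 0 := by
      rw [hcoord y, integral_congr_ae hzero, integral_zero]
    linarith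
  -- price monotonicity on the support of astar
  have hmono : (∀ x y, pref x y → 0 < astar y → pstar y ≤ pstar x) ∧
      (∀ x y, pref x y → ¬ pref y x → 0 < astar y → pstar y < pstar x) := by
    rcases hcase with hi | ⟨hii, hsep⟩
    · constructor
      · intro x y hxy hy
        obtain ⟨ξ, hCξ, hb, haffy, hmax, hcheap⟩ := hposex _ hi y hy
        by_cases haffx : (pstar + ξ) x ≤ bi
        · have hmaxx : ∀ v, (pstar + ξ) v ≤ bi → pref x v := fun v hv => htrans hxy (hmax v hv)
          have hch := hcheap x haffx hmaxx
          have hxieq := hCξ x y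
          simp only [Pi.add_apply] at hch
          linarith
        · have h1 : bi < (pstar + ξ) x := not_le.mp haffx
          have hxieq := hCξ x y
          simp only [Pi.add_apply] at h1 haffy
          linarith
      · intro x y hxy hyx hy
        obtain ⟨ξ, hCξ, hb, haffy, hmax, hcheap⟩ := hposex _ hi y hy
        by_cases haffx : (pstar + ξ) x ≤ bi
        · exact absurd (hmax x haffx) hyx
        · have h1 : bi < (pstar + ξ) x := not_le.mp haffx
          have hxieq := hCξ x y
          simp only [Pi.add_apply] at h1 haffy
          linarith
    · have hkey : ∀ x y, pref x y → 0 < astar y → x ≠ y → pstar y < pstar x := by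
        intro x y hxy hy hne
        obtain ⟨ξ, hCξ, hb, haffy, hmax, hcheap⟩ := hposex _ hii y hy
        obtain ⟨c, hc⟩ := hCξ
        have hcx := abs_le.mp (hc x)
        have hcy := abs_le.mp (hc y)
        have hsep' := hsep x y hne
        have hd : -(2*z) ≤ pstar x - pstar y := by
          by_cases haffx : (pstar + ξ) x ≤ bi
          · have hmaxx : ∀ v, (pstar + ξ) v ≤ bi → pref x v := fun v hv => htrans hxy (hmax v hv)
            have hch := hcheap x haffx hmaxx
            simp only [Pi.add_apply] at hch
            linarith
          · have h1 : bi < (pstar + ξ) x := not_le.mp haffx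
            simp only [Pi.add_apply] at h1 haffy
            linarith
        rcases abs_cases (pstar x - pstar y) with ⟨he, _⟩ | ⟨he, _⟩
        · have h2 := hsep'
          rw [he] at h2
          linarith
        · have h2 := hsep'
          rw [he] at h2
          linarith
      constructor
      · intro x y hxy hy
        by_cases hne : x = y
        · subst hne; exact le_refl _
        · exact le_of_lt (hkey x y hxy hy hne)
      · intro x y hxy hyx hy
        have hne : x ≠ y := fun h => hyx (h ▸ hxy)
        exact hkey x y hxy hy hne
  exact key_lemma pref hcomplete htrans pstar astar a hp hnonneg hsum1
    (fun x => (ha01 x).1) hsum hmono.1 hmono.2
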